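/- Let F be a finite metric space with at least two points. The following are equivalent: (i) F has no focal points; (ii) there exists a 2-covering 𝒰 of F with Δ(𝒰) < Δ(F); (iii) ∇(F) < Δ(F). -/
import Mathlib


open Metric

namespace FinDim

variable {X : Type*} [MetricSpace X]

/-- `ν_F(a)`: the distance from `a` to a nearest other point of `F`. -/
noncomputable def nu (F : Finset X) (a : X) : ℝ :=
  sInf {r : ℝ | ∃ x ∈ F, x ≠ a ∧ r = dist a x}

/-- `δ(F)`: the separation of `F`, the minimum distance between distinct points. -/
noncomputable def sep (F : Finset X) : ℝ :=
  sInf {r : ℝ | ∃ x ∈ F, ∃ y ∈ F, x ≠ y ∧ r = dist x y}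

/-- A 2-covering of `F`: a family of subsets of `F` covering `F`,
each member having at least two elements. -/
def IsTwoCover (F : Finset X) (U : Finset (Finset X)) : Prop :=
  (∀ V ∈ U, V ⊆ F) ∧ (∀ V ∈ U, 2 ≤ V.card) ∧ ∀ a ∈ F, ∃ V ∈ U, a ∈ V

/-- `Δ(𝒰)`: maximum diameter of the members of the family `𝒰`. -/
noncomputable def coverDiam (U : Finset (Finset X)) : ℝ :=
  sSup {r : ℝ | ∃ V ∈ U, r = Metric.diam (V : Set X)}

/-- `∇(F)`: the covering diameter of `F`. -/
noncomputable def nablaF (F : Finset X) : ℝ :=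
  sInf {r : ℝ | ∃ U : Finset (Finset X), IsTwoCover F U ∧ r = coverDiam U}

/-- `a` is a focal point of `F`. -/
def IsFocal (F : Finset X) (a : X) : Prop :=
  a ∈ F ∧ ∀ x ∈ F, x ≠ a → dist a x = Metric.diam (F : Set X)

/-- `H^s_𝒰(F) = Σ_{U ∈ 𝒰} Δ(U)^s`. -/
noncomputable def Hcov (U : Finset (Finset X)) (s : ℝ) : ℝ :=
  ∑ V ∈ U, Metric.diam (V : Set X) ^ s

/-- `H^s(F)`: minimum of `H^s_𝒰(F)` over 2-coverings `𝒰` with `Δ(𝒰) = ∇(F)`. -/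
noncomputable def HH (F : Finset X) (s : ℝ) : ℝ :=
  sInf {h : ℝ | ∃ U : Finset (Finset X),
    IsTwoCover F U ∧ coverDiam U = nablaF F ∧ h = Hcov U s}

/-- The finite Hausdorff dimension: the unique `s₀ ∈ (0,∞)` with
`H^{s₀}(F) = Δ(F)^{s₀}` (when `F` has no focal points). -/
noncomputable def dimfH (F : Finset X) : ℝ :=
  sInf {s : ℝ | 0 < s ∧ HH F s = Metric.diam (F : Set X) ^ s}

/-- `T_{∇(F)}(F)`: the minimal cardinality of a 2-covering `𝒰` with `Δ(𝒰) = ∇(F)`. -/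
noncomputable def Tmin (F : Finset X) : ℕ :=
  sInf {n : ℕ | ∃ U : Finset (Finset X),
    IsTwoCover F U ∧ coverDiam U = nablaF F ∧ U.card = n}

/-- The finite box dimension `dim_fB(F) = ln T_{∇(F)}(F) / ln (Δ(F)/∇(F))`. -/
noncomputable def dimfB (F : Finset X) : ℝ :=
  Real.log (Tmin F) / Real.log (Metric.diam (F : Set X) / nablaF F)

/-- `ν_A(x)` for a subset `A` of a metric space. -/
noncomputable def nuSet {Z : Type*} [MetricSpace Z] (A : Set Z) (x : Z) : ℝ :=
  sInf {r : ℝ | ∃ y ∈ A, y ≠ x ∧ r = dist x y}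

/-- `∇(A) = sup {ν_A(x) : x ∈ A}` for a subset `A` of a metric space. -/
noncomputable def nablaSet {Z : Type*} [MetricSpace Z] (A : Set Z) : ℝ :=
  sSup {r : ℝ | ∃ x ∈ A, r = nuSet A x}

end FinDim

section Aux

open FinDim

variable {X : Type*} [MetricSpace X]

lemma coverDiam_set_finite (U : Finset (Finset X)) :
    {r : ℝ | ∃ V ∈ U, r = Metric.diam (V : Set X)}.Finite := by
  have h : {r : ℝ | ∃ V ∈ U, r = Metric.diam (V : Set X)}
      = (fun V : Finset X => Metric.diam (V : Set X)) '' ↑U := by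
    ext r; simp [eq_comm]
  rw [h]; exact U.finite_toSet.image _

lemma diam_le_coverDiam {U : Finset (Finset X)} {V : Finset X} (hV : V ∈ U) :
    Metric.diam (V : Set X) ≤ coverDiam U :=
  le_csSup (coverDiam_set_finite U).bddAbove ⟨V, hV, rfl⟩

lemma coverDiam_nonneg {U : Finset (Finset X)} {V : Finset X} (hV : V ∈ U) :
    0 ≤ coverDiam U :=
  le_trans Metric.diam_nonneg (diam_le_coverDiam hV)

end Aux

open FinDim in
/-- Equivalence: no focal points ↔ existence of a 2-cover of diameter < Δ(F)
↔ ∇(F) < Δ(F). -/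
theorem stmt1 {X : Type*} [MetricSpace X] (F : Finset X) (hF : 2 ≤ F.card) :
    ((∀ a, ¬ IsFocal F a) ↔
      ∃ U : Finset (Finset X), IsTwoCover F U ∧ coverDiam U < Metric.diam (F : Set X)) ∧
    ((∃ U : Finset (Finset X), IsTwoCover F U ∧ coverDiam U < Metric.diam (F : Set X)) ↔
      nablaF F < Metric.diam (F : Set X)) := by
  classical
  have hFne : F.Nonempty := Finset.card_pos.mp (by omega)
  have hFb : Bornology.IsBounded (F : Set X) := F.finite_toSet.isBounded
  -- (ii) → (i)
  have h21 : (∃ U : Finset (Finset X), IsTwoCover F U ∧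
      coverDiam U < Metric.diam (F : Set X)) → ∀ a, ¬ IsFocal F a := by
    rintro ⟨U, ⟨hsub, hcard, hcov⟩, hlt⟩ a ⟨haF, hfoc⟩
    obtain ⟨V, hVU, haV⟩ := hcov a haF
    obtain ⟨x, hxV, hxa⟩ : ∃ x ∈ V, x ≠ a := by
      by_contra h
      push_neg at h
      have : V ⊆ {a} := fun y hy => Finset.mem_singleton.mpr (h y hy)
      have := Finset.card_le_card this
      simp at this
      have := hcard V hVU
      omega
    have hdist : dist a x = Metric.diam (F : Set X) := hfoc x (hsub V hVU hxV) hxa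
    have hle : dist a x ≤ Metric.diam (V : Set X) :=
      Metric.dist_le_diam_of_mem (V.finite_toSet.isBounded) haV hxV
    have := le_trans hle (diam_le_coverDiam hVU)
    linarith
  -- (i) → (ii)
  have h12 : (∀ a, ¬ IsFocal F a) → ∃ U : Finset (Finset X), IsTwoCover F U ∧
      coverDiam U < Metric.diam (F : Set X) := by
    intro hnof
    have hch : ∀ a ∈ F, ∃ x, x ∈ F ∧ x ≠ a ∧ dist a x < Metric.diam (F : Set X) := by
      intro a haF
      have := hnof a
      simp only [IsFocal, not_and] at this
      have := this haF
      push_neg at this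
      obtain ⟨x, hxF, hxa, hne⟩ := this
      exact ⟨x, hxF, hxa, lt_of_le_of_ne (Metric.dist_le_diam_of_mem hFb haF hxF) hne⟩
    choose! f hf1 hf2 hf3 using hch
    refine ⟨F.image (fun a => ({a, f a} : Finset X)), ⟨?_, ?_, ?_⟩, ?_⟩
    · intro V hV
      simp only [Finset.mem_image] at hV
      obtain ⟨a, haF, rfl⟩ := hV
      intro y hy
      simp only [Finset.mem_insert, Finset.mem_singleton] at hy
      rcases hy with rfl | rfl
      · exact haF
      · exact hf1 a haF
    · intro V hV
      simp only [Finset.mem_image] at hV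
      obtain ⟨a, haF, rfl⟩ := hV
      rw [Finset.card_pair (Ne.symm (hf2 a haF))]
    · intro a haF
      exact ⟨{a, f a}, Finset.mem_image_of_mem _ haF, Finset.mem_insert_self _ _⟩
    · rw [coverDiam]
      have hne : {r : ℝ | ∃ V ∈ F.image (fun a => ({a, f a} : Finset X)),
          r = Metric.diam (V : Set X)}.Nonempty := by
        obtain ⟨a, haF⟩ := hFne
        exact ⟨_, ⟨{a, f a}, Finset.mem_image_of_mem _ haF, rfl⟩⟩
      rw [(coverDiam_set_finite _).csSup_lt_iff hne]
      rintro r ⟨V, hV, rfl⟩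
      simp only [Finset.mem_image] at hV
      obtain ⟨a, haF, rfl⟩ := hV
      have : (({a, f a} : Finset X) : Set X) = {a, f a} := by simp
      rw [this, Metric.diam_pair]
      exact hf3 a haF
  -- trivial cover {F}
  have hFcover : IsTwoCover F ({F} : Finset (Finset X)) := by
    refine ⟨?_, ?_, ?_⟩
    · intro V hV; rw [Finset.mem_singleton] at hV; subst hV; exact Finset.Subset.refl _
    · intro V hV; rw [Finset.mem_singleton] at hV; subst hV; exact hF
    · intro a haF; exact ⟨F, Finset.mem_singleton_self _, haF⟩
  have hSne : {r : ℝ | ∃ U : Finset (Finset X), IsTwoCover F U ∧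
      r = coverDiam U}.Nonempty := ⟨_, _, hFcover, rfl⟩
  have hSbd : BddBelow {r : ℝ | ∃ U : Finset (Finset X), IsTwoCover F U ∧
      r = coverDiam U} := by
    refine ⟨0, ?_⟩
    rintro r ⟨U, hU, rfl⟩
    obtain ⟨a, haF⟩ := hFne
    obtain ⟨V, hVU, _⟩ := hU.2.2 a haF
    exact coverDiam_nonneg hVU
  -- (ii) ↔ (iii)
  have h23 : (∃ U : Finset (Finset X), IsTwoCover F U ∧
      coverDiam U < Metric.diam (F : Set X)) ↔ nablaF F < Metric.diam (F : Set X) := by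
    constructor
    · rintro ⟨U, hU, hlt⟩
      exact lt_of_le_of_lt (csInf_le hSbd ⟨U, hU, rfl⟩) hlt
    · intro hlt
      rw [nablaF, csInf_lt_iff hSbd hSne] at hlt
      obtain ⟨r, ⟨U, hU, rfl⟩, hr⟩ := hlt
      exact ⟨U, hU, hr⟩
  exact ⟨⟨h12, h21⟩, h23⟩
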